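/- Let φ₀(R) = 2R/(1 + R²) and e₂(R) = (R⁴ + 4R²·log R − 1)/(2R·(R² + 1)). Then for all R > 0: (i) φ₀''(R) + φ₀'(R)/R − (1/R² − 8/(1 + R²)²)·φ₀(R) = 0; (ii) e₂''(R) + e₂'(R)/R − (1/R² − 8/(1 + R²)²)·e₂(R) = 0; (iii) the Wronskian identity φ₀(R)·e₂'(R) − φ₀'(R)·e₂(R) = 2/R holds. -/

import Mathlib

open Real

lemma hd_phi (s : ℝ) : HasDerivAt (fun x : ℝ => 2*x/(1 + x^2))
    ((2 - 2*s^2)/(1 + s^2)^2) s := by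
  have hne : (1 + s^2) ≠ 0 := by positivity
  have h1 : HasDerivAt (fun x : ℝ => 2*x) 2 s := by
    simpa using (hasDerivAt_id s).const_mul (2:ℝ)
  have h2 : HasDerivAt (fun x : ℝ => 1 + x^2) (2*s) s := by
    simpa using (hasDerivAt_pow 2 s).const_add (1:ℝ)
  have := h1.div h2 hne
  refine this.congr_deriv ?_
  ring

lemma hd_phi' (s : ℝ) : HasDerivAt (fun x : ℝ => (2 - 2*x^2)/(1 + x^2)^2)
    (((-(4*s))*(1 + s^2)^2 - (2 - 2*s^2)*(2*(1 + s^2)*(2*s)))/((1 + s^2)^2)^2) s := by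
  have hne : ((1 + s^2)^2) ≠ 0 := by positivity
  have h1 : HasDerivAt (fun x : ℝ => 2 - 2*x^2) (-(4*s)) s := by
    have := ((hasDerivAt_pow 2 s).const_mul (2:ℝ)).const_sub (2:ℝ)
    refine this.congr_deriv ?_; ring
  have h2 : HasDerivAt (fun x : ℝ => (1 + x^2)^2) (2*(1 + s^2)*(2*s)) s := by
    have h0 : HasDerivAt (fun x : ℝ => 1 + x^2) (2*s) s := by
      simpa using (hasDerivAt_pow 2 s).const_add (1:ℝ)
    have := h0.pow 2
    refine this.congr_deriv ?_; ring
  exact h1.div h2 hne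

lemma hd_e2 (s : ℝ) (hs : 0 < s) :
    HasDerivAt (fun x : ℝ => (x^4 + 4*x^2*Real.log x - 1)/(2*x*(x^2 + 1)))
      ((s^4 + 6*s^2 + 1)/(2*s^2*(s^2 + 1)) + 2*Real.log s*(1 - s^2)/(s^2 + 1)^2) s := by
  have hs0 : s ≠ 0 := ne_of_gt hs
  have hne : 2*s*(s^2 + 1) ≠ 0 := by positivity
  have h4 : HasDerivAt (fun x : ℝ => x^4) (4*s^3) s := by
    simpa using hasDerivAt_pow 4 s
  have hx2 : HasDerivAt (fun x : ℝ => 4*x^2) (8*s) s := by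
    have := (hasDerivAt_pow 2 s).const_mul (4:ℝ)
    refine this.congr_deriv ?_; ring
  have hm : HasDerivAt (fun x : ℝ => 4*x^2*Real.log x)
      (8*s*Real.log s + 4*s^2*s⁻¹) s := hx2.mul (Real.hasDerivAt_log hs0)
  have hN : HasDerivAt (fun x : ℝ => x^4 + 4*x^2*Real.log x - 1)
      (4*s^3 + (8*s*Real.log s + 4*s^2*s⁻¹)) s := (h4.add hm).sub_const 1
  have hD : HasDerivAt (fun x : ℝ => 2*x*(x^2 + 1)) (2*(s^2 + 1) + 2*s*(2*s)) s := by
    have h1 : HasDerivAt (fun x : ℝ => 2*x) 2 s := by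
      simpa using (hasDerivAt_id s).const_mul (2:ℝ)
    have h2 : HasDerivAt (fun x : ℝ => x^2 + 1) (2*s) s := by
      simpa using (hasDerivAt_pow 2 s).add_const (1:ℝ)
    exact h1.mul h2
  have := hN.div hD hne
  refine this.congr_deriv ?_
  field_simp
  ring

lemma hd_e2' (s : ℝ) (hs : 0 < s) :
    HasDerivAt (fun x : ℝ => (x^4 + 6*x^2 + 1)/(2*x^2*(x^2 + 1))
        + 2*Real.log x*(1 - x^2)/(x^2 + 1)^2)
      (((4*s^3 + 12*s)*(2*s^2*(s^2 + 1))
          - (s^4 + 6*s^2 + 1)*(2*(2*s)*(s^2 + 1) + 2*s^2*(2*s)))/(2*s^2*(s^2 + 1))^2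
        + ((2*s⁻¹*(1 - s^2) + 2*Real.log s*(-(2*s)))*(s^2 + 1)^2
          - 2*Real.log s*(1 - s^2)*(2*(s^2 + 1)*(2*s)))/((s^2 + 1)^2)^2) s := by
  have hs0 : s ≠ 0 := ne_of_gt hs
  have hneA : 2*s^2*(s^2 + 1) ≠ 0 := by positivity
  have hneB : ((s^2 + 1)^2) ≠ 0 := by positivity
  have hNA : HasDerivAt (fun x : ℝ => x^4 + 6*x^2 + 1) (4*s^3 + 12*s) s := by
    have h4 : HasDerivAt (fun x : ℝ => x^4) (4*s^3) s := by simpa using hasDerivAt_pow 4 s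
    have h2 : HasDerivAt (fun x : ℝ => 6*x^2) (12*s) s := by
      have := (hasDerivAt_pow 2 s).const_mul (6:ℝ)
      refine this.congr_deriv ?_; ring
    simpa using (h4.add h2).add_const 1
  have hDA : HasDerivAt (fun x : ℝ => 2*x^2*(x^2 + 1))
      (2*(2*s)*(s^2 + 1) + 2*s^2*(2*s)) s := by
    have h1 : HasDerivAt (fun x : ℝ => 2*x^2) (2*(2*s)) s := by
      have := (hasDerivAt_pow 2 s).const_mul (2:ℝ)
      refine this.congr_deriv ?_; ring
    have h2 : HasDerivAt (fun x : ℝ => x^2 + 1) (2*s) s := by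
      simpa using (hasDerivAt_pow 2 s).add_const (1:ℝ)
    exact h1.mul h2
  have hA := hNA.div hDA hneA
  have hNB : HasDerivAt (fun x : ℝ => 2*Real.log x*(1 - x^2))
      (2*s⁻¹*(1 - s^2) + 2*Real.log s*(-(2*s))) s := by
    have h1 : HasDerivAt (fun x : ℝ => 2*Real.log x) (2*s⁻¹) s := by
      have := (Real.hasDerivAt_log hs0).const_mul (2:ℝ)
      convert this using 1
    have h2 : HasDerivAt (fun x : ℝ => 1 - x^2) (-(2*s)) s := by
      have := ((hasDerivAt_pow 2 s).const_mul (1:ℝ)).const_sub (1:ℝ)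
      simpa using this
    exact h1.mul h2
  have hDB : HasDerivAt (fun x : ℝ => (x^2 + 1)^2) (2*(s^2 + 1)*(2*s)) s := by
    have h0 : HasDerivAt (fun x : ℝ => x^2 + 1) (2*s) s := by
      simpa using (hasDerivAt_pow 2 s).add_const (1:ℝ)
    have := h0.pow 2
    refine this.congr_deriv ?_; ring
  exact hA.add (hNB.div hDB hneB)

/-- φ₀(R) = 2R/(1+R²) and e₂(R) = (R⁴ + 4R² log R − 1)/(2R(R²+1)) are solutions of
the linearized operator equation, with Wronskian φ₀ e₂' − φ₀' e₂ = 2/R. -/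
theorem stmt10 :
    ∀ R : ℝ, 0 < R →
      (deriv (deriv (fun s : ℝ => 2*s/(1 + s^2))) R
          + deriv (fun s : ℝ => 2*s/(1 + s^2)) R / R
          - (1/R^2 - 8/(1 + R^2)^2) * (2*R/(1 + R^2)) = 0) ∧
      (deriv (deriv (fun s : ℝ => (s^4 + 4*s^2*Real.log s - 1)/(2*s*(s^2 + 1)))) R
          + deriv (fun s : ℝ => (s^4 + 4*s^2*Real.log s - 1)/(2*s*(s^2 + 1))) R / R
          - (1/R^2 - 8/(1 + R^2)^2)
              * ((R^4 + 4*R^2*Real.log R - 1)/(2*R*(R^2 + 1))) = 0) ∧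
      ((2*R/(1 + R^2))
          * deriv (fun s : ℝ => (s^4 + 4*s^2*Real.log s - 1)/(2*s*(s^2 + 1))) R
        - deriv (fun s : ℝ => 2*s/(1 + s^2)) R
          * ((R^4 + 4*R^2*Real.log R - 1)/(2*R*(R^2 + 1))) = 2/R) := by
  intro R hR
  have hR0 : R ≠ 0 := ne_of_gt hR
  have h1R : (1 + R^2) ≠ 0 := by positivity
  have hR1 : (R^2 + 1) ≠ 0 := by positivity
  -- first derivative of φ₀ as a global function
  have hdphi : deriv (fun s : ℝ => 2*s/(1 + s^2))
      = fun s : ℝ => (2 - 2*s^2)/(1 + s^2)^2 := by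
    funext s; exact (hd_phi s).deriv
  have hdphiR : deriv (fun s : ℝ => 2*s/(1 + s^2)) R = (2 - 2*R^2)/(1 + R^2)^2 :=
    (hd_phi R).deriv
  have hddphiR : deriv (deriv (fun s : ℝ => 2*s/(1 + s^2))) R
      = ((-(4*R))*(1 + R^2)^2 - (2 - 2*R^2)*(2*(1 + R^2)*(2*R)))/((1 + R^2)^2)^2 := by
    rw [hdphi]; exact (hd_phi' R).deriv
  -- first derivative of e₂
  have hde2R : deriv (fun s : ℝ => (s^4 + 4*s^2*Real.log s - 1)/(2*s*(s^2 + 1))) R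
      = (R^4 + 6*R^2 + 1)/(2*R^2*(R^2 + 1)) + 2*Real.log R*(1 - R^2)/(R^2 + 1)^2 :=
    (hd_e2 R hR).deriv
  have hev : deriv (fun s : ℝ => (s^4 + 4*s^2*Real.log s - 1)/(2*s*(s^2 + 1)))
      =ᶠ[nhds R] fun s : ℝ => (s^4 + 6*s^2 + 1)/(2*s^2*(s^2 + 1))
        + 2*Real.log s*(1 - s^2)/(s^2 + 1)^2 := by
    filter_upwards [eventually_gt_nhds hR] with s hs
    exact (hd_e2 s hs).deriv
  have hdde2R : deriv (deriv (fun s : ℝ => (s^4 + 4*s^2*Real.log s - 1)/(2*s*(s^2 + 1)))) R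
      = ((4*R^3 + 12*R)*(2*R^2*(R^2 + 1))
          - (R^4 + 6*R^2 + 1)*(2*(2*R)*(R^2 + 1) + 2*R^2*(2*R)))/(2*R^2*(R^2 + 1))^2
        + ((2*R⁻¹*(1 - R^2) + 2*Real.log R*(-(2*R)))*(R^2 + 1)^2
          - 2*Real.log R*(1 - R^2)*(2*(R^2 + 1)*(2*R)))/((R^2 + 1)^2)^2 := by
    rw [hev.deriv_eq]
    exact (hd_e2' R hR).deriv
  refine ⟨?_, ?_, ?_⟩
  · rw [hddphiR, hdphiR]
    field_simp
    ring
  · rw [hdde2R, hde2R]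
    field_simp
    ring
  · rw [hde2R, hdphiR]
    field_simp
    ring
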